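/- For every complex number x with |x| < 1, the infinite product ∏_{m=1}^∞ (1 − x^m) converges and equals the absolutely convergent series ∑_{n ∈ ℤ} (−1)^n x^{n(3n−1)/2} (Euler's pentagonal number theorem). -/

import Mathlib

open Finset Filter Topology

namespace PentAux

/-- `cseq α = 3·α(α-1)/2`. -/
def cseq (α : ℕ) : ℕ := 3 * Nat.choose α 2

lemma cseq_succ (α : ℕ) : cseq (α + 1) = cseq α + 3 * α := by
  unfold cseq
  rw [Nat.choose_succ_succ, Nat.choose_one_right]
  ring

def pent (α : ℕ) : ℕ := α + cseq α
def pentneg (α : ℕ) : ℕ := 2 * α + cseq α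

lemma choose_two_succ (k : ℕ) : 2 * Nat.choose (k + 1) 2 = (k + 1) * k := by
  induction k with
  | zero => rfl
  | succ j ih =>
    rw [Nat.choose_succ_succ (j+1), Nat.choose_one_right]
    calc 2 * ((j+1) + Nat.choose (j+1) 2) = 2*(j+1) + 2*Nat.choose (j+1) 2 := by ring
    _ = 2*(j+1) + (j+1)*j := by rw [ih]
    _ = (j + 1 + 1) * (j + 1) := by ring

noncomputable def pterm (x : ℂ) (α n : ℕ) : ℂ :=
  x ^ (α * (n + 1) + cseq α) * ∏ i ∈ Icc α (n + α - 1), (1 - x ^ i)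

noncomputable def vterm (x : ℂ) (α n : ℕ) : ℂ :=
  x ^ (α * (n + 2) + cseq α) * ∏ i ∈ Icc (α + 1) (n + α), (1 - x ^ i)

lemma pterm_zero (x : ℂ) (α : ℕ) (hα : 1 ≤ α) : pterm x α 0 = x ^ pent α := by
  unfold pterm pent
  rw [Finset.Icc_eq_empty (by omega), Finset.prod_empty, mul_one]
  congr 1
  ring

lemma vterm_zero (x : ℂ) (α : ℕ) : vterm x α 0 = x ^ pentneg α := by
  unfold vterm pentneg
  rw [Finset.Icc_eq_empty (by omega), Finset.prod_empty, mul_one]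
  congr 1
  ring

/-- key pointwise identity -/
lemma pterm_succ (x : ℂ) (α n : ℕ) (hα : 1 ≤ α) :
    pterm x α (n + 1) = vterm x α n - vterm x α (n + 1) - pterm x (α + 1) n := by
  unfold pterm vterm
  have h1 : n + 1 + α - 1 = n + α := by omega
  have h2 : n + (α + 1) - 1 = n + α := by omega
  rw [h1, h2]
  have hsplit : ∏ i ∈ Icc α (n + α), (1 - x ^ i)
      = (1 - x ^ α) * ∏ i ∈ Icc (α + 1) (n + α), (1 - x ^ i) := by
    rw [Finset.Icc_add_one_left_eq_Ioc, ← Finset.Ioc_insert_left (Nat.le_add_left α n),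
      Finset.prod_insert Finset.left_notMem_Ioc]
  have htop : ∏ i ∈ Icc (α + 1) (n + 1 + α), (1 - x ^ i)
      = (∏ i ∈ Icc (α + 1) (n + α), (1 - x ^ i)) * (1 - x ^ (n + α + 1)) := by
    have : n + 1 + α = (n + α) + 1 := by omega
    rw [this, Finset.prod_Icc_succ_top (by omega)]
  rw [hsplit, htop, cseq_succ]
  have e1 : α * (n + 1 + 1) + cseq α = α * (n + 2) + cseq α := by ring_nf
  have e2 : x ^ (α * (n + 3) + cseq α) = x ^ (α * (n + 2) + cseq α) * x ^ α := by
    rw [← pow_add]; ring_nf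
  have e3 : x ^ ((α + 1) * (n + 1) + (cseq α + 3 * α))
      = x ^ (α * (n + 3) + cseq α) * x ^ (n + α + 1) := by
    rw [← pow_add]; ring_nf
  rw [e1, e3, e2]
  ring

end PentAux
section
open Finset Filter Topology PentAux

lemma prod_norm_bound {x : ℂ} (hx : ‖x‖ < 1) (s : Finset ℕ) :
    ∏ i ∈ s, ‖1 - x ^ i‖ ≤ Real.exp (1 - ‖x‖)⁻¹ := by
  have hr0 : (0:ℝ) ≤ ‖x‖ := norm_nonneg x
  calc ∏ i ∈ s, ‖1 - x ^ i‖ ≤ ∏ i ∈ s, Real.exp (‖x‖ ^ i) := by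
        refine Finset.prod_le_prod (fun i _ => norm_nonneg _) (fun i _ => ?_)
        calc ‖1 - x ^ i‖ ≤ ‖(1:ℂ)‖ + ‖x ^ i‖ := norm_sub_le _ _
        _ = ‖x‖ ^ i + 1 := by rw [norm_one, norm_pow]; ring
        _ ≤ Real.exp (‖x‖ ^ i) := Real.add_one_le_exp _
  _ = Real.exp (∑ i ∈ s, ‖x‖ ^ i) := (Real.exp_sum s _).symm
  _ ≤ Real.exp (1 - ‖x‖)⁻¹ := by
        apply Real.exp_le_exp.2
        rw [← tsum_geometric_of_lt_one hr0 hx]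
        exact Summable.sum_le_tsum s (fun i _ => pow_nonneg hr0 i)
          (summable_geometric_of_lt_one hr0 hx)

lemma norm_pterm_le {x : ℂ} (hx : ‖x‖ < 1) (α n : ℕ) :
    ‖pterm x α n‖ ≤ Real.exp (1 - ‖x‖)⁻¹ * ‖x‖ ^ (α * (n + 1)) := by
  have hr0 : (0:ℝ) ≤ ‖x‖ := norm_nonneg x
  unfold pterm
  rw [norm_mul, norm_pow]
  have hA : ‖x‖ ^ (α * (n + 1) + cseq α) ≤ ‖x‖ ^ (α * (n + 1)) :=
    pow_le_pow_of_le_one hr0 hx.le (Nat.le_add_right _ _)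
  have hB : ‖∏ i ∈ Icc α (n + α - 1), (1 - x ^ i)‖ ≤ Real.exp (1 - ‖x‖)⁻¹ :=
    (Finset.norm_prod_le _ _).trans (prod_norm_bound hx _)
  rw [mul_comm (Real.exp _)]
  exact mul_le_mul hA hB (norm_nonneg _) (pow_nonneg hr0 _)

lemma norm_vterm_le {x : ℂ} (hx : ‖x‖ < 1) (α n : ℕ) :
    ‖vterm x α n‖ ≤ Real.exp (1 - ‖x‖)⁻¹ * ‖x‖ ^ (α * (n + 2)) := by
  have hr0 : (0:ℝ) ≤ ‖x‖ := norm_nonneg x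
  unfold vterm
  rw [norm_mul, norm_pow]
  have hA : ‖x‖ ^ (α * (n + 2) + cseq α) ≤ ‖x‖ ^ (α * (n + 2)) :=
    pow_le_pow_of_le_one hr0 hx.le (Nat.le_add_right _ _)
  have hB : ‖∏ i ∈ Icc (α + 1) (n + α), (1 - x ^ i)‖ ≤ Real.exp (1 - ‖x‖)⁻¹ :=
    (Finset.norm_prod_le _ _).trans (prod_norm_bound hx _)
  rw [mul_comm (Real.exp _)]
  exact mul_le_mul hA hB (norm_nonneg _) (pow_nonneg hr0 _)

lemma summable_of_norm_le_geom {x : ℂ} (hx : ‖x‖ < 1) {g : ℕ → ℂ} {K : ℝ}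
    (h : ∀ n, ‖g n‖ ≤ K * ‖x‖ ^ n) : Summable g :=
  Summable.of_norm_bounded
    ((summable_geometric_of_lt_one (norm_nonneg x) hx).mul_left K) h

lemma pow_le_pow_exp {x : ℂ} (hx : ‖x‖ < 1) {m n : ℕ} (h : n ≤ m) :
    ‖x‖ ^ m ≤ ‖x‖ ^ n :=
  pow_le_pow_of_le_one (norm_nonneg x) hx.le h

lemma summable_pterm {x : ℂ} (hx : ‖x‖ < 1) (α : ℕ) (hα : 1 ≤ α) :
    Summable (pterm x α) := by
  refine summable_of_norm_le_geom hx (K := Real.exp (1 - ‖x‖)⁻¹) (fun n => ?_)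
  refine (norm_pterm_le hx α n).trans ?_
  have : ‖x‖ ^ (α * (n + 1)) ≤ ‖x‖ ^ n := pow_le_pow_exp hx (by nlinarith)
  have h0 : (0:ℝ) ≤ Real.exp (1 - ‖x‖)⁻¹ := (Real.exp_pos _).le
  exact mul_le_mul_of_nonneg_left this h0

lemma summable_vterm {x : ℂ} (hx : ‖x‖ < 1) (α : ℕ) (hα : 1 ≤ α) :
    Summable (vterm x α) := by
  refine summable_of_norm_le_geom hx (K := Real.exp (1 - ‖x‖)⁻¹) (fun n => ?_)
  refine (norm_vterm_le hx α n).trans ?_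
  have : ‖x‖ ^ (α * (n + 2)) ≤ ‖x‖ ^ n := pow_le_pow_exp hx (by nlinarith)
  have h0 : (0:ℝ) ≤ Real.exp (1 - ‖x‖)⁻¹ := (Real.exp_pos _).le
  exact mul_le_mul_of_nonneg_left this h0

end
section
open Finset Filter Topology PentAux

noncomputable def Sa (x : ℂ) (α : ℕ) : ℂ := ∑' n, pterm x α n

lemma Sa_rec {x : ℂ} (hx : ‖x‖ < 1) (α : ℕ) (hα : 1 ≤ α) :
    Sa x α = x ^ pent α + x ^ pentneg α - Sa x (α + 1) := by
  have hv : Summable (vterm x α) := summable_vterm hx α hα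
  have hp' : Summable (pterm x (α + 1)) := summable_pterm hx (α + 1) (by omega)
  set V := ∑' n, vterm x α n with hV
  have h1 : HasSum (vterm x α) V := hv.hasSum
  have h2 : HasSum (fun n => vterm x α (n + 1)) (V - vterm x α 0) := by
    refine (hasSum_nat_add_iff 1).2 ?_
    simpa [Finset.sum_range_one] using h1
  have htel : HasSum (fun n => vterm x α n - vterm x α (n + 1)) (vterm x α 0) := by
    simpa using h1.sub h2
  have hkey : (fun n => pterm x α (n + 1))
      = fun n => (vterm x α n - vterm x α (n + 1)) - pterm x (α + 1) n := by
    funext n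
    rw [pterm_succ x α n hα]
  have hmain : HasSum (fun n => pterm x α (n + 1)) (vterm x α 0 - Sa x (α + 1)) := by
    rw [hkey]
    exact htel.sub hp'.hasSum
  have hfull : HasSum (pterm x α)
      ((vterm x α 0 - Sa x (α + 1)) + ∑ i ∈ Finset.range 1, pterm x α i) :=
    (hasSum_nat_add_iff 1).1 hmain
  rw [Finset.sum_range_one, pterm_zero x α hα, vterm_zero x α] at hfull
  rw [Sa, hfull.tsum_eq]
  ring

lemma norm_Sa_le {x : ℂ} (hx : ‖x‖ < 1) (α : ℕ) (hα : 1 ≤ α) :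
    ‖Sa x α‖ ≤ Real.exp (1 - ‖x‖)⁻¹ * (1 - ‖x‖)⁻¹ * ‖x‖ ^ α := by
  have hr0 : (0:ℝ) ≤ ‖x‖ := norm_nonneg x
  have hsum : Summable (fun n => Real.exp (1 - ‖x‖)⁻¹ * ‖x‖ ^ α * ‖x‖ ^ n) :=
    (summable_geometric_of_lt_one hr0 hx).mul_left _
  have hb : ∀ n, ‖pterm x α n‖ ≤ Real.exp (1 - ‖x‖)⁻¹ * ‖x‖ ^ α * ‖x‖ ^ n := by
    intro n
    refine (norm_pterm_le hx α n).trans ?_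
    rw [mul_assoc, ← pow_add]
    have : ‖x‖ ^ (α * (n + 1)) ≤ ‖x‖ ^ (α + n) := pow_le_pow_exp hx (by nlinarith)
    exact mul_le_mul_of_nonneg_left this (Real.exp_pos _).le
  calc ‖Sa x α‖ ≤ ∑' n, ‖pterm x α n‖ := norm_tsum_le_tsum_norm
        ((summable_pterm hx α hα).norm)
  _ ≤ ∑' n, Real.exp (1 - ‖x‖)⁻¹ * ‖x‖ ^ α * ‖x‖ ^ n :=
        Summable.tsum_le_tsum hb (summable_pterm hx α hα).norm hsum
  _ = Real.exp (1 - ‖x‖)⁻¹ * ‖x‖ ^ α * ∑' n, ‖x‖ ^ n := tsum_mul_left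
  _ = _ := by rw [tsum_geometric_of_lt_one hr0 hx]; ring

lemma Sa_tendsto_zero {x : ℂ} (hx : ‖x‖ < 1) :
    Tendsto (fun N => Sa x (N + 1)) atTop (𝓝 0) := by
  have hr0 : (0:ℝ) ≤ ‖x‖ := norm_nonneg x
  refine squeeze_zero_norm
    (fun N => norm_Sa_le hx (N + 1) (by omega)) ?_
  have h1 : Tendsto (fun N : ℕ => ‖x‖ ^ (N + 1)) atTop (𝓝 0) :=
    (tendsto_pow_atTop_nhds_zero_of_lt_one hr0 hx).comp (tendsto_add_atTop_nat 1)
  simpa using h1.const_mul (Real.exp (1 - ‖x‖)⁻¹ * (1 - ‖x‖)⁻¹)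

end
section
open Finset Filter Topology PentAux

lemma prod_range_eq_Icc (x : ℂ) (N : ℕ) :
    ∏ i ∈ Finset.range N, (1 - x ^ (i + 1)) = ∏ i ∈ Finset.Icc 1 N, (1 - x ^ i) := by
  induction N with
  | zero => simp
  | succ n ih => rw [Finset.prod_range_succ, ih, Finset.prod_Icc_succ_top (by omega)]

lemma cseq_one : cseq 1 = 0 := rfl

lemma partial_prod_eq (x : ℂ) (N : ℕ) :
    ∏ i ∈ Finset.range N, (1 - x ^ (i + 1)) = 1 - ∑ k ∈ Finset.range N, pterm x 1 k := by
  induction N with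
  | zero => simp
  | succ n ih =>
    rw [Finset.prod_range_succ, ih, Finset.sum_range_succ]
    have hp : pterm x 1 n = x ^ (n + 1) * ∏ i ∈ Finset.Icc 1 n, (1 - x ^ i) := by
      simp [pterm, cseq_one, Nat.add_sub_cancel]
    rw [hp, ← prod_range_eq_Icc, ih]
    ring

lemma one_sub_pow_ne_zero {x : ℂ} (hx : ‖x‖ < 1) (n : ℕ) : 1 - x ^ (n + 1) ≠ 0 := by
  intro h
  have h1 : x ^ (n + 1) = 1 := by
    have := sub_eq_zero.1 h
    exact this.symm
  have : ‖x ^ (n+1)‖ < 1 := by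
    rw [norm_pow]
    exact pow_lt_one₀ (norm_nonneg x) hx (by omega)
  rw [h1, norm_one] at this
  exact lt_irrefl _ this

lemma multipliable_aux {x : ℂ} (hx : ‖x‖ < 1) :
    Multipliable (fun m : ℕ => 1 - x ^ (m + 1)) := by
  have hr0 : (0:ℝ) ≤ ‖x‖ := norm_nonneg x
  refine Complex.multipliable_of_summable_log ?_
  have hb : ∀ n : ℕ, ‖Complex.log (1 - x ^ (n + 1))‖ ≤
      ((1 - ‖x‖)⁻¹ + 1) * ‖x‖ ^ n := by
    intro n
    have hz : ‖-x ^ (n + 1)‖ < 1 := by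
      rw [norm_neg, norm_pow]
      exact pow_lt_one₀ hr0 hx (by omega)
    have hlog := Complex.norm_log_one_add_le hz
    rw [show (1 : ℂ) + -x ^ (n+1) = 1 - x ^ (n+1) by ring, norm_neg, norm_pow] at hlog
    refine hlog.trans ?_
    set a := ‖x‖ ^ (n + 1) with ha
    have hxn : a ≤ ‖x‖ ^ n := pow_le_pow_exp hx (by omega)
    have hxn1 : a ≤ ‖x‖ := (pow_le_pow_exp hx (by omega)).trans_eq (pow_one _)
    have hpos : (0:ℝ) < 1 - ‖x‖ := by linarith
    have ha0 : (0:ℝ) ≤ a := pow_nonneg hr0 _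
    have hd : 0 < 1 - a := by linarith
    have t1 : (1 - a)⁻¹ ≤ (1 - ‖x‖)⁻¹ := by
      apply inv_anti₀ hpos
      linarith
    have h2 : a ^ 2 ≤ ‖x‖ ^ n := by nlinarith
    calc a ^ 2 * (1 - a)⁻¹ / 2 + a
        ≤ a ^ 2 * (1 - a)⁻¹ + ‖x‖ ^ n := by
          have : a ^ 2 * (1 - a)⁻¹ / 2 ≤ a ^ 2 * (1 - a)⁻¹ :=
            half_le_self (by positivity)
          linarith
    _ ≤ ‖x‖ ^ n * (1 - ‖x‖)⁻¹ + ‖x‖ ^ n := by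
          have := mul_le_mul h2 t1 (by positivity) (pow_nonneg hr0 n)
          linarith
    _ = ((1 - ‖x‖)⁻¹ + 1) * ‖x‖ ^ n := by ring
  exact summable_of_norm_le_geom hx hb

end
section
open Finset Filter Topology PentAux

lemma prod_eq_one_sub_Sa {x : ℂ} (hx : ‖x‖ < 1) :
    ∏' m : ℕ, (1 - x ^ (m + 1)) = 1 - Sa x 1 := by
  have hM := multipliable_aux hx
  have h1 : Tendsto (fun N => ∏ i ∈ Finset.range N, (1 - x ^ (i + 1))) atTop
      (𝓝 (∏' m : ℕ, (1 - x ^ (m + 1)))) := hM.hasProd.tendsto_prod_nat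
  have hsum : Summable (pterm x 1) := summable_pterm hx 1 le_rfl
  have h2 : Tendsto (fun N => ∑ k ∈ Finset.range N, pterm x 1 k) atTop
      (𝓝 (Sa x 1)) := hsum.hasSum.tendsto_sum_nat
  have h3 : Tendsto (fun N => ∏ i ∈ Finset.range N, (1 - x ^ (i + 1))) atTop
      (𝓝 (1 - Sa x 1)) := by
    have := h2.const_sub 1
    refine this.congr (fun N => ?_)
    exact (partial_prod_eq x N).symm
  exact tendsto_nhds_unique h1 h3

noncomputable def dseq (x : ℂ) : ℕ → ℂ
  | 0 => 1
  | (α + 1) => (-1 : ℂ) ^ (α + 1) * (x ^ pent (α + 1) + x ^ pentneg (α + 1))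

lemma pent_ge (α : ℕ) : α ≤ pent α := Nat.le_add_right _ _
lemma pentneg_ge (α : ℕ) : α ≤ pentneg α := by unfold pentneg; omega

lemma norm_dseq_le {x : ℂ} (hx : ‖x‖ < 1) (α : ℕ) : ‖dseq x α‖ ≤ 2 * ‖x‖ ^ α := by
  have hr0 : (0:ℝ) ≤ ‖x‖ := norm_nonneg x
  cases α with
  | zero => simp [dseq]
  | succ k =>
    unfold dseq
    rw [norm_mul, norm_pow, norm_neg, norm_one, one_pow, one_mul]
    calc ‖x ^ pent (k+1) + x ^ pentneg (k+1)‖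
        ≤ ‖x ^ pent (k+1)‖ + ‖x ^ pentneg (k+1)‖ := norm_add_le _ _
    _ ≤ ‖x‖ ^ (k+1) + ‖x‖ ^ (k+1) := by
          rw [norm_pow, norm_pow]
          exact add_le_add (pow_le_pow_exp hx (pent_ge _)) (pow_le_pow_exp hx (pentneg_ge _))
    _ = 2 * ‖x‖ ^ (k+1) := by ring

lemma summable_dseq {x : ℂ} (hx : ‖x‖ < 1) : Summable (dseq x) :=
  summable_of_norm_le_geom hx (norm_dseq_le hx)

lemma telescope_P {x : ℂ} (hx : ‖x‖ < 1) (N : ℕ) :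
    ∏' m : ℕ, (1 - x ^ (m + 1)) =
      ∑ α ∈ Finset.range (N + 1), dseq x α + (-1 : ℂ) ^ (N + 1) * Sa x (N + 1) := by
  induction N with
  | zero =>
    rw [prod_eq_one_sub_Sa hx]
    simp [dseq]
    ring
  | succ n ih =>
    rw [Finset.sum_range_succ, ih, Sa_rec hx (n + 1) (by omega)]
    simp only [dseq, pow_succ]
    ring

end
section
open Finset Filter Topology PentAux

lemma hasSum_dseq {x : ℂ} (hx : ‖x‖ < 1) :
    HasSum (dseq x) (∏' m : ℕ, (1 - x ^ (m + 1))) := by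
  have hd := summable_dseq hx
  have h1 : Tendsto (fun N => ∑ α ∈ Finset.range (N + 1), dseq x α) atTop
      (𝓝 (∑' α, dseq x α)) :=
    hd.hasSum.tendsto_sum_nat.comp (tendsto_add_atTop_nat 1)
  have hz : Tendsto (fun N => (-1 : ℂ) ^ (N + 1) * Sa x (N + 1)) atTop (𝓝 0) := by
    have hb : ∀ N : ℕ, ‖(-1 : ℂ) ^ (N + 1) * Sa x (N + 1)‖ ≤
        Real.exp (1 - ‖x‖)⁻¹ * (1 - ‖x‖)⁻¹ * ‖x‖ ^ (N + 1) := by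
      intro N
      rw [norm_mul, norm_pow, norm_neg, norm_one, one_pow, one_mul]
      exact norm_Sa_le hx (N + 1) (by omega)
    refine squeeze_zero_norm hb ?_
    have := ((tendsto_pow_atTop_nhds_zero_of_lt_one (norm_nonneg x) hx).comp
      (tendsto_add_atTop_nat 1)).const_mul (Real.exp (1 - ‖x‖)⁻¹ * (1 - ‖x‖)⁻¹)
    simpa using this
  have h2 : Tendsto (fun N => ∑ α ∈ Finset.range (N + 1), dseq x α) atTop
      (𝓝 (∏' m : ℕ, (1 - x ^ (m + 1)))) := by
    have h3 : Tendsto (fun N => (∏' m : ℕ, (1 - x ^ (m + 1)))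
        - (-1 : ℂ) ^ (N + 1) * Sa x (N + 1)) atTop
        (𝓝 ((∏' m : ℕ, (1 - x ^ (m + 1))) - 0)) := tendsto_const_nhds.sub hz
    rw [sub_zero] at h3
    refine h3.congr (fun N => ?_)
    rw [eq_comm, eq_sub_iff_add_eq, ← telescope_P hx N]
  have := tendsto_nhds_unique h1 h2
  rw [← this]
  exact hd.hasSum

lemma toNat_pos_exp (k : ℕ) :
    ((((k : ℤ) + 1) * (3 * ((k : ℤ) + 1) - 1)) / 2).toNat = pent (k + 1) := by
  have hc : (2 : ℤ) * (Nat.choose (k + 1) 2 : ℤ) = ((k : ℤ) + 1) * k := by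
    exact_mod_cast choose_two_succ k
  have h2 : (((k : ℤ) + 1) * (3 * ((k : ℤ) + 1) - 1)) = 2 * ((pent (k + 1) : ℕ) : ℤ) := by
    have hp : ((pent (k + 1) : ℕ) : ℤ) = ((k : ℤ) + 1) + 3 * (Nat.choose (k + 1) 2 : ℤ) := by
      unfold pent cseq
      push_cast
      ring
    rw [hp]
    linear_combination (-3) * hc
  rw [h2, Int.mul_ediv_cancel_left _ (by norm_num), Int.toNat_natCast]

lemma toNat_neg_exp (k : ℕ) :
    (((-(k : ℤ)) * (3 * (-(k : ℤ)) - 1)) / 2).toNat = pentneg k := by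
  cases k with
  | zero => simp [pentneg, cseq]
  | succ j =>
    have hc : (2 : ℤ) * (Nat.choose (j + 1) 2 : ℤ) = ((j : ℤ) + 1) * j := by
      exact_mod_cast choose_two_succ j
    have h2 : ((-(((j : ℕ) + 1 : ℕ) : ℤ)) * (3 * (-(((j : ℕ) + 1 : ℕ) : ℤ)) - 1))
        = 2 * ((pentneg (j + 1) : ℕ) : ℤ) := by
      have hp : ((pentneg (j + 1) : ℕ) : ℤ)
          = 2 * ((j : ℤ) + 1) + 3 * (Nat.choose (j + 1) 2 : ℤ) := by
        unfold pentneg cseq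
        push_cast
        ring
      rw [hp]
      push_cast
      linear_combination (-3) * hc
    rw [h2, Int.mul_ediv_cancel_left _ (by norm_num), Int.toNat_natCast]

end
section
open Finset Filter Topology PentAux

lemma summable_of_norm_le_geom' {x : ℂ} (hx : ‖x‖ < 1) {g : ℕ → ℝ} {K : ℝ}
    (h : ∀ n, ‖g n‖ ≤ K * ‖x‖ ^ n) : Summable g :=
  Summable.of_norm_bounded
    ((summable_geometric_of_lt_one (norm_nonneg x) hx).mul_left K) h

lemma f_pos_eval (x : ℂ) (k : ℕ) (m : ℤ) (hm : m = (k : ℤ) + 1) :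
    (-1 : ℂ) ^ m * x ^ (m * (3 * m - 1) / 2).toNat
      = (-1 : ℂ) ^ (k + 1) * x ^ pent (k + 1) := by
  have h1 : m = ((k + 1 : ℕ) : ℤ) := by rw [hm]; push_cast; ring
  rw [h1, zpow_natCast]
  congr 2
  exact toNat_pos_exp k

lemma f_neg_eval (x : ℂ) (k : ℕ) (m : ℤ) (hm : m = -(k : ℤ)) :
    (-1 : ℂ) ^ m * x ^ (m * (3 * m - 1) / 2).toNat
      = (-1 : ℂ) ^ k * x ^ pentneg k := by
  rw [hm, zpow_neg, zpow_natCast, ← inv_pow, inv_neg, inv_one]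
  congr 2
  exact toNat_neg_exp k

/-- Euler's pentagonal number theorem: for `‖x‖ < 1`, the infinite product
`∏_{m=1}^∞ (1 - x^m)` converges and equals the absolutely convergent series
`∑_{n ∈ ℤ} (-1)^n x^{n(3n-1)/2}`. -/
theorem euler_pentagonal_number_theorem (x : ℂ) (hx : ‖x‖ < 1) :
    Multipliable (fun m : ℕ => 1 - x ^ (m + 1)) ∧
    Summable (fun n : ℤ => ‖(-1 : ℂ) ^ n * x ^ (n * (3 * n - 1) / 2).toNat‖) ∧
    ∏' m : ℕ, (1 - x ^ (m + 1)) =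
      ∑' n : ℤ, (-1 : ℂ) ^ n * x ^ (n * (3 * n - 1) / 2).toNat := by
  have hr0 : (0:ℝ) ≤ ‖x‖ := norm_nonneg x
  set f : ℤ → ℂ := fun n => (-1 : ℂ) ^ n * x ^ (n * (3 * n - 1) / 2).toNat with hf
  have hfpos : ∀ n : ℕ, f ((n : ℤ) + 1) = (-1 : ℂ) ^ (n + 1) * x ^ pent (n + 1) :=
    fun n => f_pos_eval x n _ rfl
  have hfneg : ∀ n : ℕ, f (-((n : ℤ) + 1)) = (-1 : ℂ) ^ (n + 1) * x ^ pentneg (n + 1) :=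
    fun n => f_neg_eval x (n + 1) _ (by push_cast; ring)
  have hf0 : f 0 = 1 := by simp [hf]
  have ha : Summable (fun n : ℕ => (-1 : ℂ) ^ (n + 1) * x ^ pent (n + 1)) := by
    refine summable_of_norm_le_geom hx (K := 1) (fun n => ?_)
    rw [norm_mul, norm_pow, norm_pow, norm_neg, norm_one, one_pow, one_mul, one_mul]
    exact pow_le_pow_exp hx ((Nat.le_succ n).trans (pent_ge (n + 1)))
  have hb : Summable (fun n : ℕ => (-1 : ℂ) ^ (n + 1) * x ^ pentneg (n + 1)) := by
    refine summable_of_norm_le_geom hx (K := 1) (fun n => ?_)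
    rw [norm_mul, norm_pow, norm_pow, norm_neg, norm_one, one_pow, one_mul, one_mul]
    exact pow_le_pow_exp hx ((Nat.le_succ n).trans (pentneg_ge (n + 1)))
  have hd := summable_dseq hx
  have hdsum := hasSum_dseq hx
  have hsplit : (∑' α, dseq x α) =
      1 + ((∑' n : ℕ, (-1 : ℂ) ^ (n + 1) * x ^ pent (n + 1))
        + (∑' n : ℕ, (-1 : ℂ) ^ (n + 1) * x ^ pentneg (n + 1))) := by
    rw [Summable.tsum_eq_zero_add hd]
    congr 1
    rw [← Summable.tsum_add ha hb]
    congr 1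
    funext n
    show dseq x (n + 1) = _
    unfold dseq
    ring
  have hP : (1 : ℂ) + ((∑' n : ℕ, (-1 : ℂ) ^ (n + 1) * x ^ pent (n + 1))
        + (∑' n : ℕ, (-1 : ℂ) ^ (n + 1) * x ^ pentneg (n + 1)))
      = ∏' m : ℕ, (1 - x ^ (m + 1)) := by
    rw [← hsplit]
    exact hdsum.tsum_eq
  have hpos : HasSum (fun n : ℕ => f ((n : ℤ) + 1))
      (∑' n : ℕ, (-1 : ℂ) ^ (n + 1) * x ^ pent (n + 1)) :=
    HasSum.congr_fun ha.hasSum (fun n => hfpos n)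
  have hneg : HasSum (fun n : ℕ => f (-((n : ℤ) + 1)))
      (∑' n : ℕ, (-1 : ℂ) ^ (n + 1) * x ^ pentneg (n + 1)) :=
    HasSum.congr_fun hb.hasSum (fun n => hfneg n)
  have hz : HasSum f (∏' m : ℕ, (1 - x ^ (m + 1))) := by
    have := hpos.of_add_one_of_neg_add_one hneg
    rw [hf0] at this
    convert this using 1
    rw [← hP]
    ring
  refine ⟨multipliable_aux hx, ?_, hz.tsum_eq.symm⟩
  refine Summable.of_nat_of_neg ?_ ?_
  · rw [← summable_nat_add_iff 1]
    refine summable_of_norm_le_geom' hx (K := 1) (fun n => ?_)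
    rw [Real.norm_eq_abs, abs_of_nonneg (norm_nonneg _)]
    have h1 : f ((n + 1 : ℕ) : ℤ) = (-1 : ℂ) ^ (n + 1) * x ^ pent (n + 1) :=
      f_pos_eval x n _ (by push_cast; ring)
    rw [show ‖f ((n + 1 : ℕ) : ℤ)‖ = ‖(-1 : ℂ) ^ (n + 1) * x ^ pent (n + 1)‖ from by rw [h1]]
    rw [norm_mul, norm_pow, norm_pow, norm_neg, norm_one, one_pow, one_mul, one_mul]
    exact pow_le_pow_exp hx ((Nat.le_succ n).trans (pent_ge (n + 1)))
  · refine summable_of_norm_le_geom' hx (K := 1) (fun n => ?_)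
    rw [Real.norm_eq_abs, abs_of_nonneg (norm_nonneg _)]
    have h2 : f (-(n : ℤ)) = (-1 : ℂ) ^ n * x ^ pentneg n := f_neg_eval x n _ rfl
    rw [show ‖f (-(n : ℤ))‖ = ‖(-1 : ℂ) ^ n * x ^ pentneg n‖ from by rw [h2]]
    rw [norm_mul, norm_pow, norm_pow, norm_neg, norm_one, one_pow, one_mul, one_mul]
    exact pow_le_pow_exp hx (pentneg_ge n)
end
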